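/- Let g_k(x) = α_k + β_k·x for k = 1,2 with β₂ > β₁, and suppose the intersection point θ = (α₁−α₂)/(β₂−β₁) lies in (0,1). Let V : [0,1] → ℝ be continuous with V(x) > 0 for all x, and let f : [0,1] → ℝ be nonnegative, bounded, measurable, and continuous at θ. Define R_I(n) = ∫₀¹ Φ(−√n·|g₁(x)−g₂(x)|/√V(x)) · |g₂(x)−g₁(x)| · f(x) dx. Then lim_{n→∞} n·R_I(n) = V(θ)·f(θ)/(2(β₂−β₁)). -/

import Mathlib

open MeasureTheory Filter Set Real

/-- Standard normal cumulative distribution function `Φ`. -/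
noncomputable def stdNormalCDF (x : ℝ) : ℝ :=
  ∫ t in Set.Iic x, Real.exp (-t ^ 2 / 2) / Real.sqrt (2 * Real.pi)

noncomputable def phi (t : ℝ) : ℝ := Real.exp (-t ^ 2 / 2) / Real.sqrt (2 * Real.pi)


lemma Phi_eq (x : ℝ) : stdNormalCDF x = ∫ t in Set.Iic x, phi t := rfl

lemma phi_eq' (t : ℝ) : phi t = Real.exp (-(1/2) * t ^ 2) * (Real.sqrt (2 * Real.pi))⁻¹ := by
  rw [phi, div_eq_mul_inv]; ring_nf

lemma phi_cont : Continuous phi := by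
  unfold phi
  fun_prop

lemma phi_pos (t : ℝ) : 0 < phi t := by
  unfold phi
  positivity

lemma phi_integrable : Integrable phi := by
  have h := (integrable_exp_neg_mul_sq (by norm_num : (0:ℝ) < 1/2)).mul_const
    (Real.sqrt (2 * Real.pi))⁻¹
  refine h.congr ?_
  filter_upwards with t
  rw [phi_eq']

lemma phi_integral : ∫ t, phi t = 1 := by
  have h := integral_gaussian (1/2 : ℝ)
  have h2 : ∫ t : ℝ, Real.exp (-(1/2) * t ^ 2) = Real.sqrt (2 * Real.pi) := by
    rw [h]; congr 1; rw [div_div_eq_mul_div, mul_comm]; norm_num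
  have : ∫ t, phi t = (∫ t : ℝ, Real.exp (-(1/2) * t ^ 2)) * (Real.sqrt (2 * Real.pi))⁻¹ := by
    rw [← integral_mul_const]
    congr 1; ext t; rw [phi_eq']
  rw [this, h2, mul_inv_cancel₀]
  positivity

lemma Phi_nonneg (x : ℝ) : 0 ≤ stdNormalCDF x :=
  setIntegral_nonneg measurableSet_Iic (fun t _ => (phi_pos t).le)

lemma Phi_le_one (x : ℝ) : stdNormalCDF x ≤ 1 := by
  rw [Phi_eq, ← phi_integral]
  exact setIntegral_le_integral phi_integrable (Eventually.of_forall fun t => (phi_pos t).le)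

lemma Phi_mono : Monotone stdNormalCDF := by
  intro x y hxy
  rw [Phi_eq, Phi_eq]
  exact setIntegral_mono_set phi_integrable.integrableOn
    (Eventually.of_forall fun t => (phi_pos t).le)
    (HasSubset.Subset.eventuallyLE (Iic_subset_Iic.mpr hxy))

lemma phi_even (t : ℝ) : phi (-t) = phi t := by unfold phi; rw [neg_pow]; norm_num

lemma Phi_zero : stdNormalCDF 0 = 1/2 := by
  have hsplit := integral_add_compl measurableSet_Iic phi_integrable (s := Iic (0:ℝ))
  rw [compl_Iic, phi_integral] at hsplit
  have hsym : ∫ t in Iic (0:ℝ), phi t = ∫ t in Ioi (0:ℝ), phi t := by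
    rw [← neg_zero, ← integral_comp_neg_Ioi]
    simp only [phi_even, neg_zero]
  have h0 : stdNormalCDF 0 = ∫ t in Iic (0:ℝ), phi t := Phi_eq 0
  rw [h0]
  linarith

lemma Phi_sub (x : ℝ) : stdNormalCDF x = stdNormalCDF 0 + ∫ t in (0:ℝ)..x, phi t := by
  rw [Phi_eq, Phi_eq]
  rw [← intervalIntegral.integral_Iic_sub_Iic phi_integrable.integrableOn
    phi_integrable.integrableOn]
  ring

lemma Phi_hasDerivAt (x : ℝ) : HasDerivAt stdNormalCDF (phi x) x := by
  have h : HasDerivAt (fun u => stdNormalCDF 0 + ∫ t in (0:ℝ)..u, phi t) (phi x) x :=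
    ((phi_cont.integral_hasStrictDerivAt 0 x).hasDerivAt).const_add _
  exact h.congr_of_eventuallyEq (Eventually.of_forall fun u => (Phi_sub u))

lemma Phi_continuous : Continuous stdNormalCDF := by
  have : Differentiable ℝ stdNormalCDF := fun x => (Phi_hasDerivAt x).differentiableAt
  exact this.continuous

lemma neg_mul_phi_integrable : Integrable (fun s : ℝ => -s * phi s) := by
  have h := (integrable_mul_exp_neg_mul_sq (by norm_num : (0:ℝ) < 1/2)).mul_const
    (-(Real.sqrt (2 * Real.pi))⁻¹)
  refine h.congr ?_
  filter_upwards with t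
  rw [phi_eq']
  ring

lemma phi_tendsto_atBot : Tendsto phi atBot (nhds 0) := by
  have hsq : Tendsto (fun x : ℝ => x ^ 2) atBot atTop := by
    have h1 : Tendsto (fun x : ℝ => -x) atBot atTop := tendsto_neg_atBot_atTop
    have h2 : Tendsto (fun x : ℝ => x ^ 2) atTop atTop := tendsto_pow_atTop (by norm_num)
    have := h2.comp h1
    refine this.congr fun x => ?_
    simp [Function.comp, neg_pow]
  have h2 : Tendsto (fun x : ℝ => -x ^ 2 / 2) atBot atBot := by
    apply Filter.Tendsto.atBot_div_const (by norm_num : (0:ℝ) < 2)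
    exact tendsto_neg_atTop_atBot.comp hsq
  have h1 : Tendsto (fun x : ℝ => Real.exp (-x ^ 2 / 2)) atBot (nhds 0) :=
    Real.tendsto_exp_atBot.comp h2
  have := h1.div_const (Real.sqrt (2 * Real.pi))
  rw [zero_div] at this
  exact this

lemma phi_tendsto_atTop : Tendsto phi atTop (nhds 0) := by
  have := phi_tendsto_atBot.comp tendsto_neg_atTop_atBot
  simpa [Function.comp_def, phi_even] using this

lemma integral_neg_mul_phi (a : ℝ) : ∫ s in Iic a, -s * phi s = phi a := by
  have hderiv : ∀ x ∈ Iic a, HasDerivAt phi (-x * phi x) x := by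
    intro x _
    have h : HasDerivAt (fun t : ℝ => Real.exp (-t ^ 2 / 2) / Real.sqrt (2 * Real.pi))
        (Real.exp (-x ^ 2 / 2) * (-x) / Real.sqrt (2 * Real.pi)) x := by
      have h2 : HasDerivAt (fun t : ℝ => -t ^ 2 / 2) (-x) x := by
        have := ((hasDerivAt_pow 2 x).neg).div_const 2
        simpa using this.congr_deriv (by ring)
      exact (h2.exp).div_const _
    unfold phi
    convert h using 1
    ring
  have := integral_Iic_of_hasDerivAt_of_tendsto' hderiv
    neg_mul_phi_integrable.integrableOn phi_tendsto_atBot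
  rw [this, sub_zero]

lemma Phi_tail {t : ℝ} (ht : 0 < t) : stdNormalCDF (-t) ≤ phi t / t := by
  have hle : ∀ s ∈ Iic (-t), phi s ≤ (1/t) * (-s * phi s) := by
    intro s hs
    have hs' : t ≤ -s := by simpa using neg_le_neg (mem_Iic.mp hs)
    have h1 : 1 ≤ -s / t := (one_le_div ht).mpr hs'
    calc phi s = 1 * phi s := by ring
    _ ≤ (-s/t) * phi s := by
        apply mul_le_mul_of_nonneg_right h1 (phi_pos s).le
    _ = (1/t) * (-s * phi s) := by ring
  have hmono := setIntegral_mono_on phi_integrable.integrableOn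
    ((neg_mul_phi_integrable.integrableOn).const_mul (1/t)) measurableSet_Iic hle
  have h2 : ∫ s in Iic (-t), (1/t) * (-s * phi s) = (1/t) * phi t := by
    rw [MeasureTheory.integral_const_mul, integral_neg_mul_phi, phi_even]
  rw [Phi_eq, ← Phi_eq (-t)]
  rw [Phi_eq (-t)]
  calc (∫ s in Iic (-t), phi s) ≤ ∫ s in Iic (-t), (1/t) * (-s * phi s) := hmono
  _ = phi t / t := by rw [h2]; ring

lemma phi_hasDerivAt (x : ℝ) : HasDerivAt phi (-x * phi x) x := by
  have h : HasDerivAt (fun t : ℝ => Real.exp (-t ^ 2 / 2) / Real.sqrt (2 * Real.pi))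
      (Real.exp (-x ^ 2 / 2) * (-x) / Real.sqrt (2 * Real.pi)) x := by
    have h2 : HasDerivAt (fun t : ℝ => -t ^ 2 / 2) (-x) x := by
      have := ((hasDerivAt_pow 2 x).neg).div_const 2
      simpa using this.congr_deriv (by ring)
    exact (h2.exp).div_const _
  unfold phi
  convert h using 1
  ring

lemma mul_phi_tendsto : Tendsto (fun t : ℝ => t * phi t) atTop (nhds 0) := by
  have h := Real.tendsto_pow_mul_exp_neg_atTop_nhds_zero 1
  have hb : ∀ᶠ t : ℝ in atTop, t * phi t ≤ (t ^ 1 * Real.exp (-t)) / Real.sqrt (2 * Real.pi) := by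
    filter_upwards [eventually_ge_atTop (2:ℝ)] with t ht
    have h1 : -t ^ 2 / 2 ≤ -t := by nlinarith
    have : Real.exp (-t ^ 2 / 2) ≤ Real.exp (-t) := Real.exp_le_exp.mpr h1
    unfold phi
    rw [pow_one, div_eq_mul_inv, div_eq_mul_inv, ← mul_assoc]
    apply mul_le_mul_of_nonneg_right _ (by positivity)
    exact mul_le_mul_of_nonneg_left this (by linarith)
  have h0 : ∀ᶠ t : ℝ in atTop, 0 ≤ t * phi t := by
    filter_upwards [eventually_ge_atTop (0:ℝ)] with t ht
    exact mul_nonneg ht (phi_pos t).le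
  have hup : Tendsto (fun t : ℝ => (t ^ 1 * Real.exp (-t)) / Real.sqrt (2 * Real.pi)) atTop
      (nhds 0) := by
    have := h.div_const (Real.sqrt (2 * Real.pi))
    rwa [zero_div] at this
  exact squeeze_zero' h0 hb hup

lemma phi_comp_integrable {c : ℝ} (hc : 0 < c) : Integrable (fun u : ℝ => phi (c * u)) := by
  have h := (integrable_exp_neg_mul_sq (by positivity : (0:ℝ) < c^2/2)).mul_const
    (Real.sqrt (2 * Real.pi))⁻¹
  refine h.congr ?_
  filter_upwards with t
  rw [phi_eq']
  ring_nf

lemma Phi_comp_tendsto {c : ℝ} (hc : 0 < c) :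
    Tendsto (fun u : ℝ => stdNormalCDF (-(c * u))) atTop (nhds 0) := by
  have hcu : Tendsto (fun u : ℝ => c * u) atTop atTop := by
    exact Tendsto.const_mul_atTop hc tendsto_id
  have hub : Tendsto (fun u : ℝ => phi (c * u) / (c * u)) atTop (nhds 0) := by
    exact Tendsto.div_atTop (phi_tendsto_atTop.comp hcu) hcu
  refine squeeze_zero' ?_ ?_ hub
  · exact Eventually.of_forall fun u => Phi_nonneg _
  · filter_upwards [hcu.eventually_gt_atTop 0] with u hu
    exact Phi_tail hu

lemma integrableOn_mul_Phi {c : ℝ} (hc : 0 < c) :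
    IntegrableOn (fun u : ℝ => u * stdNormalCDF (-(c * u))) (Ioi 0) := by
  refine Integrable.mono' (((phi_comp_integrable hc).div_const c).integrableOn) ?_ ?_
  · apply Continuous.aestronglyMeasurable
    exact continuous_id.mul (Phi_continuous.comp (continuous_const.mul continuous_id).neg)
  · filter_upwards [ae_restrict_mem measurableSet_Ioi] with u (hu : (0:ℝ) < u)
    rw [Real.norm_eq_abs, abs_of_nonneg (mul_nonneg hu.le (Phi_nonneg _))]
    calc u * stdNormalCDF (-(c * u)) ≤ u * (phi (c * u) / (c * u)) := by
          apply mul_le_mul_of_nonneg_left (Phi_tail (by positivity)) hu.le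
    _ = phi (c * u) / c := by field_simp

lemma H_hasDerivAt {c : ℝ} (hc : 0 < c) (u : ℝ) :
    HasDerivAt (fun u : ℝ => (u ^ 2 / 2 - 1 / (2 * c ^ 2)) * stdNormalCDF (-(c * u)) -
        u / (2 * c) * phi (c * u))
      (u * stdNormalCDF (-(c * u))) u := by
  have hcu : HasDerivAt (fun u : ℝ => c * u) c u := by
    simpa using (hasDerivAt_id u).const_mul c
  have h1 : HasDerivAt (fun u : ℝ => u ^ 2 / 2 - 1 / (2 * c ^ 2)) u u := by
    have := ((hasDerivAt_pow 2 u).div_const 2).sub_const (1 / (2 * c ^ 2))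
    simpa using this.congr_deriv (by ring)
  have h2 : HasDerivAt (fun u : ℝ => stdNormalCDF (-(c * u))) (-(c * phi (c * u))) u := by
    have := (Phi_hasDerivAt (-(c * u))).comp u hcu.neg
    refine this.congr_deriv ?_
    rw [phi_even]
    ring
  have h3 : HasDerivAt (fun u : ℝ => phi (c * u)) (-(c * u) * phi (c * u) * c) u :=
    (phi_hasDerivAt (c * u)).comp u hcu
  have h4 : HasDerivAt (fun u : ℝ => u / (2 * c)) (1 / (2 * c)) u := by
    simpa using (hasDerivAt_id u).div_const (2 * c)
  have := (h1.mul h2).sub (h4.mul h3)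
  refine this.congr_deriv ?_
  field_simp
  ring

lemma H_tendsto {c : ℝ} (hc : 0 < c) :
    Tendsto (fun u : ℝ => (u ^ 2 / 2 - 1 / (2 * c ^ 2)) * stdNormalCDF (-(c * u)) -
      u / (2 * c) * phi (c * u)) atTop (nhds 0) := by
  have hcu : Tendsto (fun u : ℝ => c * u) atTop atTop := Tendsto.const_mul_atTop hc tendsto_id
  have t1 : Tendsto (fun u : ℝ => u * phi (c * u)) atTop (nhds 0) := by
    have := (mul_phi_tendsto.comp hcu).div_const c
    rw [zero_div] at this
    refine this.congr' ?_
    filter_upwards [eventually_gt_atTop (0:ℝ)] with u hu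
    simp only [Function.comp]
    field_simp
  have t2 : Tendsto (fun u : ℝ => u ^ 2 / 2 * stdNormalCDF (-(c * u))) atTop (nhds 0) := by
    have hub : Tendsto (fun u : ℝ => u * phi (c * u) / (2 * c)) atTop (nhds 0) := by
      have := t1.div_const (2 * c); rwa [zero_div] at this
    refine squeeze_zero' ?_ ?_ hub
    · filter_upwards [eventually_ge_atTop (0:ℝ)] with u hu
      exact mul_nonneg (by positivity) (Phi_nonneg _)
    · filter_upwards [eventually_gt_atTop (0:ℝ)] with u hu
      have hcu0 : 0 < c * u := by positivity
      calc u ^ 2 / 2 * stdNormalCDF (-(c * u)) ≤ u ^ 2 / 2 * (phi (c * u) / (c * u)) := by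
            apply mul_le_mul_of_nonneg_left (Phi_tail hcu0) (by positivity)
      _ = u * phi (c * u) / (2 * c) := by field_simp
  have t3 : Tendsto (fun u : ℝ => 1 / (2 * c ^ 2) * stdNormalCDF (-(c * u))) atTop (nhds 0) := by
    have := (Phi_comp_tendsto hc).const_mul (1 / (2 * c ^ 2))
    rwa [mul_zero] at this
  have t4 : Tendsto (fun u : ℝ => u / (2 * c) * phi (c * u)) atTop (nhds 0) := by
    have := t1.div_const (2 * c)
    rw [zero_div] at this
    refine this.congr fun u => by ring
  have := (t2.sub t3).sub t4
  rw [sub_zero, sub_zero] at this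
  refine this.congr fun u => by ring

lemma key_integral {c : ℝ} (hc : 0 < c) :
    ∫ u in Ioi (0:ℝ), u * stdNormalCDF (-(c * u)) = 1 / (4 * c ^ 2) := by
  have := integral_Ioi_of_hasDerivAt_of_tendsto' (a := 0)
    (fun x _ => H_hasDerivAt hc x) (integrableOn_mul_Phi hc) (H_tendsto hc)
  rw [this]
  simp only [mul_zero, neg_zero, zero_div, zero_sub, zero_pow, Phi_zero]
  field_simp
  ring

lemma phi_abs (c u : ℝ) : phi (c * |u|) = phi (c * u) := by
  unfold phi
  rw [mul_pow, mul_pow, sq_abs]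

lemma abs_mul_Phi_integrable {c : ℝ} (hc : 0 < c) :
    Integrable (fun u : ℝ => |u| * stdNormalCDF (-(c * |u|))) := by
  refine Integrable.mono' ((phi_comp_integrable hc).div_const c) ?_ ?_
  · apply Continuous.aestronglyMeasurable
    exact continuous_abs.mul
      (Phi_continuous.comp (continuous_const.mul continuous_abs).neg)
  · filter_upwards with u
    rw [Real.norm_eq_abs, abs_of_nonneg (mul_nonneg (abs_nonneg u) (Phi_nonneg _))]
    rcases eq_or_ne u 0 with rfl | hu
    · simp only [abs_zero, zero_mul]
      exact div_nonneg (phi_pos _).le hc.le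
    · have h0 : 0 < |u| := abs_pos.mpr hu
      have hcu : 0 < c * |u| := by positivity
      calc |u| * stdNormalCDF (-(c * |u|)) ≤ |u| * (phi (c * |u|) / (c * |u|)) :=
            mul_le_mul_of_nonneg_left (Phi_tail hcu) h0.le
      _ = phi (c * |u|) / c := by field_simp
      _ = phi (c * u) / c := by rw [phi_abs]

lemma full_integral {c : ℝ} (hc : 0 < c) :
    ∫ u : ℝ, |u| * stdNormalCDF (-(c * |u|)) = 1 / (2 * c ^ 2) := by
  have hg := abs_mul_Phi_integrable hc
  have hsplit := integral_add_compl measurableSet_Iic hg (s := Iic (0:ℝ))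
  rw [compl_Iic] at hsplit
  have hIoi : ∫ u in Ioi (0:ℝ), |u| * stdNormalCDF (-(c * |u|)) = 1 / (4 * c ^ 2) := by
    rw [← key_integral hc]
    refine setIntegral_congr_fun measurableSet_Ioi fun u (hu : (0:ℝ) < u) => ?_
    rw [abs_of_pos hu]
  have hIic : ∫ u in Iic (0:ℝ), |u| * stdNormalCDF (-(c * |u|)) = 1 / (4 * c ^ 2) := by
    have := integral_comp_neg_Ioi (c := (0:ℝ))
      (f := fun u : ℝ => |u| * stdNormalCDF (-(c * |u|)))
    rw [neg_zero] at this
    rw [← this]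
    simp only [abs_neg]
    exact hIoi
  rw [← hsplit, hIic, hIoi]
  ring

/-- For two linear response functions `g_k(x) = α_k + β_k x` with `β₂ > β₁`
crossing at `θ = (α₁−α₂)/(β₂−β₁) ∈ (0,1)`, the ideal regret satisfies
`lim_{n→∞} n R_I(n) = V(θ) f(θ) / (2(β₂−β₁))`. -/
theorem ideal_regret_limit_one_dim
    (α1 α2 β1 β2 θ : ℝ) (hβ : β1 < β2)
    (hθ_def : θ = (α1 - α2) / (β2 - β1)) (hθ : θ ∈ Set.Ioo (0 : ℝ) 1)
    (V f : ℝ → ℝ)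
    (hV_cont : ContinuousOn V (Set.Icc 0 1))
    (hV_pos : ∀ x ∈ Set.Icc (0 : ℝ) 1, 0 < V x)
    (hf_nonneg : ∀ x ∈ Set.Icc (0 : ℝ) 1, 0 ≤ f x)
    (hf_bdd : ∃ C, ∀ x ∈ Set.Icc (0 : ℝ) 1, f x ≤ C)
    (hf_meas : Measurable f)
    (hf_cont : ContinuousWithinAt f (Set.Icc 0 1) θ) :
    Tendsto (fun n : ℕ => (n : ℝ) * ∫ x in (0 : ℝ)..1,
        stdNormalCDF (-(Real.sqrt (n : ℝ) * |(α1 + β1 * x) - (α2 + β2 * x)|) /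
            Real.sqrt (V x)) *
          |(α2 + β2 * x) - (α1 + β1 * x)| * f x)
      atTop (nhds (V θ * f θ / (2 * (β2 - β1)))) := by
  obtain ⟨hθ0, hθ1⟩ := hθ
  set b : ℝ := β2 - β1 with hb_def
  have hb : 0 < b := sub_pos.mpr hβ
  have hθIcc : θ ∈ Set.Icc (0:ℝ) 1 := ⟨hθ0.le, hθ1.le⟩
  have hαθ : α1 - α2 = θ * b := by
    rw [hθ_def]; field_simp
  -- abs rewrite
  have habs : ∀ x : ℝ, |(α1 + β1 * x) - (α2 + β2 * x)| = b * |x - θ| := by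
    intro x
    have h1 : (α1 + β1 * x) - (α2 + β2 * x) = b * (θ - x) := by
      rw [hb_def]; nlinarith [hαθ]
    rw [h1, abs_mul, abs_of_pos hb, abs_sub_comm]
  -- max of V
  obtain ⟨xM, hxM, hVM⟩ := isCompact_Icc.exists_isMaxOn (Set.nonempty_Icc.mpr zero_le_one)
    hV_cont
  set M : ℝ := V xM with hM_def
  have hM : 0 < M := hV_pos xM hxM
  have hVM' : ∀ x ∈ Set.Icc (0:ℝ) 1, V x ≤ M := fun x hx => hVM hx
  -- bound for f
  obtain ⟨C, hC⟩ := hf_bdd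
  set C' : ℝ := max C 0 with hC'_def
  have hC'0 : 0 ≤ C' := le_max_right _ _
  have hC' : ∀ x ∈ Set.Icc (0:ℝ) 1, f x ≤ C' := fun x hx =>
    (hC x hx).trans (le_max_left _ _)
  -- constants
  set σ : ℝ := Real.sqrt (V θ) with hσ_def
  have hσ : 0 < σ := Real.sqrt_pos.mpr (hV_pos θ hθIcc)
  set c : ℝ := b / σ with hc_def
  have hc : 0 < c := by positivity
  set c1 : ℝ := b / Real.sqrt M with hc1_def
  have hsM : 0 < Real.sqrt M := Real.sqrt_pos.mpr hM
  have hc1 : 0 < c1 := by positivity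
  -- the rescaled integrand family
  set aff : ℕ → ℝ → ℝ := fun n u => θ + u / Real.sqrt n with haff
  set inn : ℕ → ℝ → ℝ := fun n u =>
    stdNormalCDF (-(b * |u|) / Real.sqrt (V (aff n u))) * (b * |u|) * f (aff n u)
    with hinn
  set F : ℕ → ℝ → ℝ := fun n =>
    Set.indicator (Set.Ioc (-θ * Real.sqrt n) ((1-θ) * Real.sqrt n)) (inn n) with hF
  set g : ℝ → ℝ := fun u => stdNormalCDF (-(b * |u|) / σ) * (b * |u|) * f θ with hg
  -- mapsTo fact
  have hmaps : ∀ n : ℕ, ∀ u ∈ Set.Ioc (-θ * Real.sqrt n) ((1-θ) * Real.sqrt n),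
      aff n u ∈ Set.Ioc (0:ℝ) 1 := by
    intro n u hu
    rcases eq_or_lt_of_le (Real.sqrt_nonneg (n:ℝ)) with hs0 | hs0
    · exfalso
      rw [← hs0] at hu
      simp at hu
    · obtain ⟨h1, h2⟩ := hu
      constructor
      · have : -θ < u / Real.sqrt n := by
          rw [lt_div_iff₀ hs0]; linarith [h1]
        simp only [haff]; linarith
      · have : u / Real.sqrt n ≤ 1 - θ := by
          rw [div_le_iff₀ hs0]; linarith [h2]
        simp only [haff]; linarith
  have hmapsIcc : ∀ n : ℕ, Set.MapsTo (aff n)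
      (Set.Icc (-θ * Real.sqrt n) ((1-θ) * Real.sqrt n)) (Set.Icc (0:ℝ) 1) := by
    intro n u hu
    rcases eq_or_lt_of_le (Real.sqrt_nonneg (n:ℝ)) with hs0 | hs0
    · have hu0 : u = 0 := by
        rw [← hs0] at hu
        obtain ⟨h1, h2⟩ := hu
        simp at h1 h2
        linarith
      have : aff n u = θ := by
        simp only [haff, hu0, zero_div, add_zero]
      rw [this]; exact hθIcc
    · obtain ⟨h1, h2⟩ := hu
      constructor
      · have : -θ ≤ u / Real.sqrt n := by
          rw [le_div_iff₀ hs0]; linarith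
        simp only [haff]; linarith
      · have : u / Real.sqrt n ≤ 1 - θ := by
          rw [div_le_iff₀ hs0]; linarith
        simp only [haff]; linarith
  have haff_cont : ∀ n : ℕ, Continuous (aff n) := fun n =>
    continuous_const.add (continuous_id.div_const _)
  -- measurability
  have hmeasF : ∀ n, AEStronglyMeasurable (F n) volume := by
    intro n
    rw [hF]
    rw [aestronglyMeasurable_indicator_iff measurableSet_Ioc]
    have hPhiPart : ContinuousOn
        (fun u => stdNormalCDF (-(b * |u|) / Real.sqrt (V (aff n u))) * (b * |u|))
        (Set.Icc (-θ * Real.sqrt n) ((1-θ) * Real.sqrt n)) := by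
      refine ContinuousOn.mul ?_ (continuous_const.mul continuous_abs).continuousOn
      refine Phi_continuous.comp_continuousOn ?_
      refine ContinuousOn.div (continuous_const.mul continuous_abs).neg.continuousOn ?_ ?_
      · exact Real.continuous_sqrt.comp_continuousOn
          (hV_cont.comp (haff_cont n).continuousOn (hmapsIcc n))
      · intro u hu
        exact ne_of_gt (Real.sqrt_pos.mpr (hV_pos _ (hmapsIcc n hu)))
    refine AEStronglyMeasurable.mul ?_
      ((hf_meas.comp (haff_cont n).measurable).aestronglyMeasurable.restrict)
    exact (hPhiPart.aestronglyMeasurable measurableSet_Icc).mono_measure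
      (Measure.restrict_mono Set.Ioc_subset_Icc_self le_rfl)
  -- bound
  set bound : ℝ → ℝ := fun u => (C' * b / c1) * phi (c1 * u) with hbound_def
  have hbound_int : Integrable bound := (phi_comp_integrable hc1).const_mul _
  have hbound_nonneg : ∀ u, 0 ≤ bound u := fun u =>
    mul_nonneg (by positivity) (phi_pos _).le
  have h_bound : ∀ n : ℕ, ∀ᵐ u : ℝ, ‖F n u‖ ≤ bound u := by
    intro n
    filter_upwards with u
    simp only [hF]
    by_cases hu : u ∈ Set.Ioc (-θ * Real.sqrt n) ((1-θ) * Real.sqrt n)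
    · rw [Set.indicator_of_mem hu]
      have hx : aff n u ∈ Set.Icc (0:ℝ) 1 := Set.Ioc_subset_Icc_self (hmaps n u hu)
      have hfx0 : 0 ≤ f (aff n u) := hf_nonneg _ hx
      have hfxC : f (aff n u) ≤ C' := hC' _ hx
      have hVx : 0 < V (aff n u) := hV_pos _ hx
      have hsVx : 0 < Real.sqrt (V (aff n u)) := Real.sqrt_pos.mpr hVx
      have hVxM : Real.sqrt (V (aff n u)) ≤ Real.sqrt M := Real.sqrt_le_sqrt (hVM' _ hx)
      have hPhi_le : stdNormalCDF (-(b * |u|) / Real.sqrt (V (aff n u)))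
          ≤ stdNormalCDF (-(c1 * |u|)) := by
        apply Phi_mono
        rw [neg_div]
        apply neg_le_neg
        have : c1 * |u| = (b * |u|) / Real.sqrt M := by
          rw [hc1_def]; ring
        rw [this]
        exact div_le_div_of_nonneg_left (by positivity) hsVx hVxM
      have hnn : 0 ≤ inn n u :=
        mul_nonneg (mul_nonneg (Phi_nonneg _) (by positivity)) hfx0
      rw [Real.norm_eq_abs, abs_of_nonneg hnn]
      have step1 : inn n u ≤ stdNormalCDF (-(c1 * |u|)) * (b * |u|) * C' := by
        rw [hinn]
        apply mul_le_mul _ hfxC hfx0 (mul_nonneg (Phi_nonneg _) (by positivity))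
        exact mul_le_mul_of_nonneg_right hPhi_le (by positivity)
      refine step1.trans ?_
      rcases eq_or_ne u 0 with rfl | hu0
      · simp only [abs_zero, mul_zero, zero_mul]
        exact hbound_nonneg 0
      · have h0 : 0 < |u| := abs_pos.mpr hu0
        have hcu1 : 0 < c1 * |u| := by positivity
        calc stdNormalCDF (-(c1 * |u|)) * (b * |u|) * C'
            ≤ (phi (c1 * |u|) / (c1 * |u|)) * (b * |u|) * C' := by
              apply mul_le_mul_of_nonneg_right
                (mul_le_mul_of_nonneg_right (Phi_tail hcu1) (by positivity)) hC'0
        _ = bound u := by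
              rw [hbound_def]
              simp only
              rw [phi_abs c1 u]
              field_simp
    · rw [Set.indicator_of_notMem hu]
      simpa using hbound_nonneg u
  -- pointwise limit
  have hs_tend : Tendsto (fun n : ℕ => Real.sqrt n) atTop atTop := by
    have h1 : Tendsto (fun x : ℝ => x ^ (1/2 : ℝ)) atTop atTop :=
      tendsto_rpow_atTop (by norm_num)
    have h2 := h1.comp (tendsto_natCast_atTop_atTop (R := ℝ))
    refine h2.congr fun n => ?_
    simp only [Function.comp]
    rw [← Real.sqrt_eq_rpow]
  have h_lim : ∀ u : ℝ, Tendsto (fun n => F n u) atTop (nhds (g u)) := by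
    intro u
    have hmem : ∀ᶠ n : ℕ in atTop,
        u ∈ Set.Ioc (-θ * Real.sqrt n) ((1-θ) * Real.sqrt n) := by
      have h1 : Tendsto (fun n : ℕ => -θ * Real.sqrt n) atTop atBot := by
        have := (hs_tend.const_mul_atTop hθ0)
        have h2 := tendsto_neg_atTop_atBot.comp this
        refine h2.congr fun n => ?_
        simp only [Function.comp, neg_mul]
      have h2 : Tendsto (fun n : ℕ => (1-θ) * Real.sqrt n) atTop atTop :=
        hs_tend.const_mul_atTop (by linarith)
      filter_upwards [h1.eventually_lt_atBot u, h2.eventually_ge_atTop u] with n ha hb'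
      exact ⟨ha, hb'⟩
    have haff_tend : Tendsto (fun n : ℕ => aff n u) atTop (nhds θ) := by
      have h0 : Tendsto (fun n : ℕ => u / Real.sqrt n) atTop (nhds 0) :=
        Tendsto.div_atTop tendsto_const_nhds hs_tend
      have h1 := (tendsto_const_nhds (x := θ) (f := atTop (α := ℕ))).add h0
      rw [add_zero] at h1
      exact h1
    have haff_tendW : Tendsto (fun n : ℕ => aff n u) atTop (nhdsWithin θ (Set.Icc (0:ℝ) 1)) := by
      rw [tendsto_nhdsWithin_iff]
      exact ⟨haff_tend, hmem.mono fun n hn => Set.Ioc_subset_Icc_self (hmaps n u hn)⟩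
    have hV_tend : Tendsto (fun n : ℕ => V (aff n u)) atTop (nhds (V θ)) :=
      (hV_cont θ hθIcc).tendsto.comp haff_tendW
    have hf_tend : Tendsto (fun n : ℕ => f (aff n u)) atTop (nhds (f θ)) :=
      hf_cont.tendsto.comp haff_tendW
    have hPhiarg : Tendsto (fun n : ℕ => -(b * |u|) / Real.sqrt (V (aff n u))) atTop
        (nhds (-(b * |u|) / σ)) :=
      tendsto_const_nhds.div (hV_tend.sqrt) (ne_of_gt hσ)
    have hinn_tend : Tendsto (fun n => inn n u) atTop (nhds (g u)) :=
      ((Phi_continuous.continuousAt.tendsto.comp hPhiarg).mul tendsto_const_nhds).mul hf_tend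
    refine hinn_tend.congr' ?_
    filter_upwards [hmem] with n hn
    simp only [hF]
    rw [Set.indicator_of_mem hn]
  -- dominated convergence
  have hDCT : Tendsto (fun n => ∫ u, F n u) atTop (nhds (∫ u, g u)) :=
    MeasureTheory.tendsto_integral_of_dominated_convergence bound hmeasF hbound_int h_bound
      (Eventually.of_forall h_lim)
  -- value of the limit integral
  have hval : ∫ u, g u = V θ * f θ / (2 * b) := by
    have h1 : ∀ u : ℝ, g u = (b * f θ) * (|u| * stdNormalCDF (-(c * |u|))) := by
      intro u
      simp only [hg]
      have harg : -(b * |u|) / σ = -(c * |u|) := by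
        rw [hc_def]
        field_simp
      rw [harg]; ring
    simp_rw [h1]
    rw [MeasureTheory.integral_const_mul, full_integral hc]
    have hc2 : c ^ 2 = b ^ 2 / V θ := by
      rw [hc_def, div_pow, hσ_def, Real.sq_sqrt (hV_pos θ hθIcc).le]
    rw [hc2]
    have hVθ : 0 < V θ := hV_pos θ hθIcc
    field_simp
  rw [← hval]
  -- identify the sequence with ∫ F n for n ≥ 1
  refine hDCT.congr' ?_
  filter_upwards [eventually_ge_atTop 1] with n hn
  have hn0 : (0:ℝ) < n := by exact_mod_cast hn
  have hs : 0 < Real.sqrt n := Real.sqrt_pos.mpr hn0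
  set s : ℝ := Real.sqrt n with hs_def
  set G : ℝ → ℝ := fun x =>
    stdNormalCDF (-(s * (b * |x - θ|)) / Real.sqrt (V x)) * (b * |x - θ|) * f x with hG
  have ha : (∫ x in (0:ℝ)..1,
      stdNormalCDF (-(s * |(α1 + β1 * x) - (α2 + β2 * x)|) / Real.sqrt (V x)) *
        |(α2 + β2 * x) - (α1 + β1 * x)| * f x) = ∫ x in (0:ℝ)..1, G x := by
    apply intervalIntegral.integral_congr
    intro x _
    rw [hG]
    simp only
    rw [abs_sub_comm (α2 + β2 * x) (α1 + β1 * x), habs x]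
  have hsub := intervalIntegral.integral_comp_add_div
    (a := -θ * s) (b := (1-θ) * s) (f := G) (ne_of_gt hs) θ
  have e1 : θ + (-θ * s)/s = 0 := by field_simp; ring
  have e2 : θ + ((1-θ) * s)/s = 1 := by field_simp; ring
  rw [e1, e2] at hsub
  have hinn_eq : ∀ u : ℝ, s * G (θ + u / s) = inn n u := by
    intro u
    rw [hG, hinn]
    simp only [haff]
    rw [← hs_def]
    have habs2 : |(θ + u/s) - θ| = |u| / s := by
      rw [add_sub_cancel_left, abs_div, abs_of_pos hs]
    rw [habs2]
    have h3 : s * (b * (|u|/s)) = b * |u| := by field_simp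
    rw [h3]
    field_simp
  have hn2 : (n:ℝ) = s * s := (Real.mul_self_sqrt (Nat.cast_nonneg n)).symm
  have hab : -θ * s ≤ (1-θ) * s := by nlinarith
  symm
  calc (n:ℝ) * ∫ x in (0 : ℝ)..1,
        stdNormalCDF (-(Real.sqrt (n : ℝ) * |(α1 + β1 * x) - (α2 + β2 * x)|) /
            Real.sqrt (V x)) * |(α2 + β2 * x) - (α1 + β1 * x)| * f x
      = (s * s) * ∫ x in (0:ℝ)..1, G x := by rw [← hs_def, ha, ← hn2]
    _ = s * (s • ∫ x in (0:ℝ)..1, G x) := by rw [smul_eq_mul]; ring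
    _ = s * ∫ u in (-θ * s)..((1-θ) * s), G (θ + u / s) := by rw [hsub]
    _ = ∫ u in (-θ * s)..((1-θ) * s), s * G (θ + u / s) :=
        (intervalIntegral.integral_const_mul s _).symm
    _ = ∫ u in (-θ * s)..((1-θ) * s), inn n u :=
        intervalIntegral.integral_congr fun u _ => hinn_eq u
    _ = ∫ u in Set.Ioc (-θ * s) ((1-θ) * s), inn n u :=
        intervalIntegral.integral_of_le hab
    _ = ∫ u, F n u := by
        simp only [hF, ← hs_def]
        exact (MeasureTheory.integral_indicator measurableSet_Ioc).symm
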